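/- arXiv:2201.04479 — 4 statements merged into one kernel-verified Lean document; each statement's English description precedes it below -/
import Mathlib

section
/- For integers n ≥ 2 and k ≥ 3 with (n,k) ≠ (2,3), the formal power series Q(t) = (1-t)^{-1} · (1 - n t + n t^{k-1} - t^k)^{-1} over ℚ has all Taylor coefficients strictly positive. -/
open PowerSeries

/-- The power series `Q(t) = (1-t)⁻¹ · (1 - n t + n t^(k-1) - t^k)⁻¹` over `ℚ`. -/
noncomputable def Qser (n k : ℕ) : PowerSeries ℚ :=
  (1 - PowerSeries.X)⁻¹ *
    (1 - (n : ℚ) • PowerSeries.X + (n : ℚ) • PowerSeries.X ^ (k - 1)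
      - PowerSeries.X ^ k)⁻¹

section Aux

open Finset

/-- `P = 1 + X^(k-1) - (n-1)(X + ... + X^(k-2))` where `k = m+3`. -/
noncomputable def Pser (n m : ℕ) : PowerSeries ℚ :=
  1 + PowerSeries.X ^ (m+2)
    - PowerSeries.C (R := ℚ) ((n:ℚ)-1) * (∑ i ∈ range (m+1), PowerSeries.X ^ (i+1))

/-- `H = (1-X) / P`. -/
noncomputable def Hser (n m : ℕ) : PowerSeries ℚ :=
  (1 - PowerSeries.X) * (Pser n m)⁻¹

lemma constCoeff_Pser (n m : ℕ) : constantCoeff (R := ℚ) (Pser n m) = 1 := by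
  simp [Pser, map_sum]

lemma geom_aux (m : ℕ) :
    (1 - (X : PowerSeries ℚ)) * (∑ i ∈ range (m+1), X ^ (i+1)) = X - X ^ (m+2) := by
  have h1 : (∑ i ∈ range (m+1), (X:PowerSeries ℚ) ^ (i+1)) = X * ∑ i ∈ range (m+1), X ^ i := by
    rw [Finset.mul_sum]; exact Finset.sum_congr rfl fun i _ => by ring
  have h2 := geom_sum_mul (X : PowerSeries ℚ) (m+1)
  rw [h1]; linear_combination -(X : PowerSeries ℚ) * h2

lemma factorD (n m : ℕ) :
    (1 - PowerSeries.X) * Pser n m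
      = 1 - (n : ℚ) • PowerSeries.X + (n : ℚ) • PowerSeries.X ^ (m+2)
        - PowerSeries.X ^ (m+3) := by
  rw [smul_eq_C_mul, smul_eq_C_mul, Pser, map_sub, map_one]
  have h := geom_aux m
  have hx : (X:PowerSeries ℚ) ^ (m+3) = X * X ^ (m+2) := by ring
  rw [hx]
  linear_combination (-(PowerSeries.C (R := ℚ) (n:ℚ) - 1)) * h

lemma HP (n m : ℕ) : Hser n m * Pser n m = 1 - PowerSeries.X := by
  rw [Hser, mul_assoc, PowerSeries.inv_mul_cancel _ (by rw [constCoeff_Pser]; norm_num),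
    mul_one]

lemma masterSeries (n m : ℕ) :
    Hser n m = 1 - PowerSeries.X
      + PowerSeries.C (R := ℚ) ((n:ℚ)-1) * (∑ i ∈ range (m+1), PowerSeries.X ^ (i+1) * Hser n m)
      - PowerSeries.X ^ (m+2) * Hser n m := by
  have h := HP n m
  rw [Pser] at h
  rw [← Finset.sum_mul]
  linear_combination h

/-- The master coefficient recurrence for `H`. -/
lemma master (n m : ℕ) (j : ℕ) :
    coeff (R := ℚ) j (Hser n m) =
      (if j = 0 then 1 else 0) - (if j = 1 then 1 else 0)
      + ((n:ℚ)-1) * (∑ i ∈ range (m+1),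
          if i+1 ≤ j then coeff (R := ℚ) (j-(i+1)) (Hser n m) else 0)
      - (if m+2 ≤ j then coeff (R := ℚ) (j-(m+2)) (Hser n m) else 0) := by
  conv_lhs => rw [masterSeries n m]
  rw [map_sub, map_add, map_sub, coeff_one, coeff_X, coeff_C_mul, map_sum]
  congr 2
  · congr 1
    exact Finset.sum_congr rfl fun i _ => coeff_X_pow_mul' _ _ _
  · exact coeff_X_pow_mul' _ _ _

lemma f0 (n m : ℕ) : coeff (R := ℚ) 0 (Hser n m) = 1 := by
  have h := master n m 0; simpa using h

lemma f1 (n m : ℕ) : coeff (R := ℚ) 1 (Hser n m) = (n:ℚ) - 2 := by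
  have h := master n m 1
  have hs : (∑ i ∈ range (m+1),
      if i+1 ≤ 1 then coeff (R := ℚ) (1-(i+1)) (Hser n m) else 0) = 1 := by
    rw [Finset.sum_eq_single 0]
    · simp [f0]
    · intro i _ hi; rw [if_neg (by omega)]
    · intro h; simp at h
  rw [hs] at h
  simp at h
  rw [h]; ring

/-- Main induction: coefficients of `H` are nonnegative and satisfy
`f (j-(m+1)) ≤ f j`. -/
lemma invariant (n m : ℕ) (hn : 2 ≤ n) (h23 : n = 2 → m ≠ 0) :
    ∀ j, 0 ≤ coeff (R := ℚ) j (Hser n m) ∧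
      (m+1 ≤ j → coeff (R := ℚ) (j-(m+1)) (Hser n m) ≤ coeff (R := ℚ) j (Hser n m)) := by
  have hn2 : (2:ℚ) ≤ (n:ℚ) := by exact_mod_cast hn
  intro j
  induction j using Nat.strong_induction_on with
  | _ j IH =>
  rcases Nat.lt_or_ge j (m+2) with hj | hj
  · -- j ≤ m+1
    rcases Nat.eq_zero_or_pos j with rfl | hj0
    · refine ⟨by rw [f0]; norm_num, fun h => by omega⟩
    rcases eq_or_lt_of_le (Nat.succ_le_of_lt hj0) with rfl | hj1
    · -- j = 1
      constructor
      · rw [f1]; linarith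
      · intro h1
        have hm : m = 0 := by omega
        have hn3 : 3 ≤ n := by
          rcases Nat.lt_or_ge n 3 with h | h
          · exact absurd hm (h23 (by omega))
          · exact h
        have hn3' : (3:ℚ) ≤ (n:ℚ) := by exact_mod_cast hn3
        rw [hm]; simp only [Nat.sub_self]
        rw [f0, f1]; linarith
    · -- 2 ≤ j ≤ m+1
      have hj2 : 2 ≤ j := hj1
      have hM := master n m j
      rw [if_neg (by omega), if_neg (by omega), if_neg (by omega)] at hM
      have hsum : 0 ≤ ∑ i ∈ range (m+1),
          if i+1 ≤ j then coeff (R := ℚ) (j-(i+1)) (Hser n m) else 0 := by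
        apply Finset.sum_nonneg
        intro i _
        split_ifs with h
        · exact (IH (j-(i+1)) (by omega)).1
        · exact le_refl 0
      constructor
      · rw [hM]
        nlinarith [mul_nonneg (by linarith : (0:ℚ) ≤ (n:ℚ)-1) hsum]
      · intro hmj
        have hjm : j = m+1 := by omega
        subst hjm
        have hone : coeff (R := ℚ) 0 (Hser n m) ≤ ∑ i ∈ range (m+1),
            if i+1 ≤ m+1 then coeff (R := ℚ) (m+1-(i+1)) (Hser n m) else 0 := by
          have := Finset.single_le_sum (f := fun i =>
              if i+1 ≤ m+1 then coeff (R := ℚ) (m+1-(i+1)) (Hser n m) else 0)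
            (fun i _ => by
              split_ifs with h
              · exact (IH _ (by omega)).1
              · exact le_refl 0)
            (Finset.self_mem_range_succ m)
          simpa using this
        simp only [Nat.sub_self]
        rw [hM]
        rw [f0] at hone ⊢
        nlinarith [mul_nonneg (by linarith : (0:ℚ) ≤ (n:ℚ)-2) hsum]
  · -- j ≥ m+2
    have hM := master n m j
    rw [if_neg (by omega), if_neg (by omega), if_pos (by omega)] at hM
    have hsc : (∑ i ∈ range (m+1),
        if i+1 ≤ j then coeff (R := ℚ) (j-(i+1)) (Hser n m) else 0)
        = ∑ i ∈ range (m+1), coeff (R := ℚ) (j-(i+1)) (Hser n m) := by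
      refine Finset.sum_congr rfl fun i hi => ?_
      rw [if_pos (by simp at hi; omega)]
    rw [hsc] at hM
    have hprev := (IH (j-1) (by omega)).2 (by omega)
    have hidx : j-1-(m+1) = j-(m+2) := by omega
    rw [hidx] at hprev
    have hprev0 := (IH (j-1) (by omega)).1
    have hsub0 : ∀ i ∈ range (m+1), 0 ≤ coeff (R := ℚ) (j-(i+1)) (Hser n m) :=
      fun i hi => (IH (j-(i+1)) (by simp at hi; omega)).1
    have hsum0 : 0 ≤ ∑ i ∈ range (m+1), coeff (R := ℚ) (j-(i+1)) (Hser n m) :=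
      Finset.sum_nonneg hsub0
    have key : coeff (R := ℚ) (j-(m+1)) (Hser n m) ≤ coeff (R := ℚ) j (Hser n m) := by
      rcases Nat.eq_zero_or_pos m with rfl | hm1
      · -- m = 0 : the case k = 3, where n ≥ 3 is needed
        have hn3 : 3 ≤ n := by
          rcases Nat.lt_or_ge n 3 with h | h
          · exact absurd rfl (h23 (by omega))
          · exact h
        have hn3' : (3:ℚ) ≤ (n:ℚ) := by exact_mod_cast hn3
        simp only [zero_add, Finset.range_one, Finset.sum_singleton] at hM hprev ⊢
        rw [hM]
        linarith [mul_nonneg (by linarith : (0:ℚ) ≤ (n:ℚ)-3) hprev0]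
      · -- m ≥ 1
        have hpair : coeff (R := ℚ) (j-1) (Hser n m) + coeff (R := ℚ) (j-(m+1)) (Hser n m)
            ≤ ∑ i ∈ range (m+1), coeff (R := ℚ) (j-(i+1)) (Hser n m) := by
          have hsub : ({0, m} : Finset ℕ) ⊆ range (m+1) := by
            intro x hx; simp at hx
            rcases hx with rfl | rfl <;> simp [Nat.lt_succ_iff]
          have hle := Finset.sum_le_sum_of_subset_of_nonneg hsub
            (fun i hi _ => hsub0 i hi)
          have hps : ∑ i ∈ ({0, m} : Finset ℕ), coeff (R := ℚ) (j-(i+1)) (Hser n m)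
              = coeff (R := ℚ) (j-1) (Hser n m) + coeff (R := ℚ) (j-(m+1)) (Hser n m) := by
            rw [Finset.sum_pair (by omega)]
          rw [hps] at hle; exact hle
        rw [hM]
        linarith [mul_nonneg (by linarith : (0:ℚ) ≤ (n:ℚ)-2) hsum0]
    exact ⟨le_trans (IH (j-(m+1)) (by omega)).1 key, fun _ => key⟩

lemma constCoeff_oneSubX : constantCoeff (R := ℚ) (1 - PowerSeries.X) = 1 := by simp

lemma oneSubX_inv : (1 - PowerSeries.X : PowerSeries ℚ)⁻¹ = PowerSeries.mk fun _ => (1:ℚ) := by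
  have h : (1 - PowerSeries.X : PowerSeries ℚ) * PowerSeries.mk (fun _ => (1:ℚ)) = 1 := by
    ext j
    rw [sub_mul, one_mul, map_sub, coeff_one]
    have : (PowerSeries.X : PowerSeries ℚ) * PowerSeries.mk (fun _ => (1:ℚ))
        = PowerSeries.X ^ 1 * PowerSeries.mk (fun _ => (1:ℚ)) := by rw [pow_one]
    rw [this, coeff_X_pow_mul']
    cases j <;> simp
  calc (1 - PowerSeries.X : PowerSeries ℚ)⁻¹
      = (1 - PowerSeries.X : PowerSeries ℚ)⁻¹ *
          ((1 - PowerSeries.X) * PowerSeries.mk fun _ => (1:ℚ)) := by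
        rw [h, mul_one]
    _ = ((1 - PowerSeries.X : PowerSeries ℚ)⁻¹ * (1 - PowerSeries.X)) *
          PowerSeries.mk fun _ => (1:ℚ) := by
        ring
    _ = PowerSeries.mk fun _ => (1:ℚ) := by
        rw [PowerSeries.inv_mul_cancel _ (by rw [constCoeff_oneSubX]; norm_num), one_mul]

lemma pos_mul {A B : PowerSeries ℚ} (hA0 : 0 < coeff (R := ℚ) 0 A)
    (hA : ∀ i, 0 ≤ coeff (R := ℚ) i A) (hB : ∀ i, 0 < coeff (R := ℚ) i B) :
    ∀ j, 0 < coeff (R := ℚ) j (A * B) := by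
  intro j
  rw [coeff_mul]
  apply Finset.sum_pos' (fun p _ => mul_nonneg (hA p.1) (le_of_lt (hB p.2)))
  exact ⟨(0, j), by simp, mul_pos hA0 (hB j)⟩

lemma Qdecomp (n m : ℕ) :
    Qser n (m+3) = Hser n m *
      ((PowerSeries.mk fun _ => (1:ℚ)) *
        ((PowerSeries.mk fun _ => (1:ℚ)) * (PowerSeries.mk fun _ => (1:ℚ)))) := by
  have hD : Qser n (m+3) = (1 - PowerSeries.X)⁻¹ * ((1 - PowerSeries.X) * Pser n m)⁻¹ := by
    rw [Qser, factorD]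
    norm_num
  rw [hD, PowerSeries.mul_inv_rev, ← oneSubX_inv, Hser]
  have hc : (1 - PowerSeries.X : PowerSeries ℚ) * (1 - PowerSeries.X)⁻¹ = 1 :=
    PowerSeries.mul_inv_cancel _ (by rw [constCoeff_oneSubX]; norm_num)
  calc (1 - PowerSeries.X : PowerSeries ℚ)⁻¹ * ((Pser n m)⁻¹ * (1 - PowerSeries.X)⁻¹)
      = (Pser n m)⁻¹ * ((1 - PowerSeries.X)⁻¹ * (1 - PowerSeries.X)⁻¹) := by ring
    _ = ((1 - PowerSeries.X) * (Pser n m)⁻¹) *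
        ((1 - PowerSeries.X)⁻¹ * ((1 - PowerSeries.X)⁻¹ * (1 - PowerSeries.X)⁻¹)) := by
        rw [← mul_assoc ((1 - PowerSeries.X) * (Pser n m)⁻¹)]
        rw [show ((1 - PowerSeries.X) * (Pser n m)⁻¹) * (1 - PowerSeries.X)⁻¹
            = (Pser n m)⁻¹ * ((1 - PowerSeries.X) * (1 - PowerSeries.X)⁻¹) by ring, hc]
        ring

end Aux

theorem Qser_coeff_pos (n k : ℕ) (hn : 2 ≤ n) (hk : 3 ≤ k)
    (hnk : (n, k) ≠ (2, 3)) :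
    ∀ j : ℕ, 0 < PowerSeries.coeff (R := ℚ) j (Qser n k) := by
  obtain ⟨m, rfl⟩ : ∃ m, k = m + 3 := ⟨k - 3, by omega⟩
  have h23 : n = 2 → m ≠ 0 := by
    intro hn2 hm0
    exact hnk (by rw [hn2, hm0])
  have hone : ∀ i, 0 < coeff (R := ℚ) i (PowerSeries.mk fun _ => (1:ℚ)) := by
    intro i; rw [coeff_mk]; norm_num
  have honne : ∀ i, 0 ≤ coeff (R := ℚ) i (PowerSeries.mk fun _ => (1:ℚ)) :=
    fun i => le_of_lt (hone i)
  have hone0 : 0 < coeff (R := ℚ) 0 (PowerSeries.mk fun _ => (1:ℚ)) := hone 0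
  have hB : ∀ i, 0 < coeff (R := ℚ) i
      ((PowerSeries.mk fun _ => (1:ℚ)) *
        ((PowerSeries.mk fun _ => (1:ℚ)) * (PowerSeries.mk fun _ => (1:ℚ)))) :=
    pos_mul hone0 honne (pos_mul hone0 honne hone)
  intro j
  rw [Qdecomp]
  exact pos_mul (by rw [f0]; norm_num) (fun i => (invariant n m hn h23 i).1) hB j
end

section
/- Let n ≥ 2 and k ≥ 3 be integers and let (c_j)_{j≥0} be a sequence of real numbers (with convention c_s = 0 for s < 0) such that c_j = 0 for 0 ≤ j ≤ k-1, c_j ≥ 0 for all j ≥ k, and c_{j+1} ≤ n·c_j - n·c_{j+2-k} + c_{j+1-k} for all j ≥ k-1. Then c_j = 0 for all j. -/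
theorem sequence_vanishes (n k : ℕ) (hn : 2 ≤ n) (hk : 3 ≤ k)
    (c : ℤ → ℝ)
    (hneg : ∀ s : ℤ, s < 0 → c s = 0)
    (hinit : ∀ j : ℤ, 0 ≤ j → j ≤ (k : ℤ) - 1 → c j = 0)
    (hnonneg : ∀ j : ℤ, (k : ℤ) ≤ j → 0 ≤ c j)
    (hrec : ∀ j : ℤ, (k : ℤ) - 1 ≤ j →
      c (j + 1) ≤ (n : ℝ) * c j - (n : ℝ) * c (j + 2 - k) + c (j + 1 - k)) :
    ∀ j : ℤ, c j = 0 := by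
  have key : ∀ m : ℕ, c m = 0 := by
    intro m
    induction m using Nat.strong_induction_on with
    | _ m ih =>
      by_cases h : (m : ℤ) ≤ (k : ℤ) - 1
      · exact hinit m (by positivity) h
      · push_neg at h
        have hk' : (k : ℤ) ≤ m := by omega
        have hzero : ∀ s : ℤ, s < m → c s = 0 := by
          intro s hs
          rcases lt_or_ge s 0 with h0 | h0
          · exact hneg s h0
          · obtain ⟨t, rfl⟩ := Int.eq_ofNat_of_zero_le h0
            exact ih t (by exact_mod_cast hs)
        have hr := hrec ((m : ℤ) - 1) (by omega)
        have hm : (m:ℤ) - 1 + 1 = m := by ring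
        rw [hm] at hr
        have h1 : c ((m:ℤ) - 1) = 0 := hzero _ (by omega)
        have h2 : c ((m:ℤ) - 1 + 2 - k) = 0 := hzero _ (by omega)
        have h3 : c ((m:ℤ) - k) = 0 := hzero _ (by omega)
        rw [h1, h2, h3] at hr
        simp at hr
        exact le_antisymm hr (hnonneg m hk')
  intro j
  rcases lt_or_ge j 0 with h | h
  · exact hneg j h
  · obtain ⟨t, rfl⟩ := Int.eq_ofNat_of_zero_le h
    exact key t
end

section
/- Let n ≥ 2 and k ≥ 3 be integers with (n,k) ∉ {(2,3), (2,4), (3,3)}. Then the polynomial p(t) = 1 - n t + n t^{k-1} - t^k has a real root r with 0 < r < 1, and consequently the Taylor coefficients b_j of Q(t) = (1-t)^{-1} p(t)^{-1} grow exponentially: there exist c > 0 and q > 1 with b_j ≥ c·q^j for all j. -/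
open PowerSeries Finset

/-! ### Auxiliary lemmas -/

lemma psGeom (m : ℕ) :
    (1 - X : PowerSeries ℝ) * ∑ i ∈ Finset.range m, X ^ (i+1) = X - X ^ (m+1) := by
  induction m with
  | zero => simp
  | succ m ih =>
    rw [Finset.sum_range_succ, mul_add, ih]
    ring

noncomputable def Gser (n m : ℕ) : PowerSeries ℝ :=
  1 - ((n : ℝ) - 1) • ∑ i ∈ Finset.range m, X ^ (i+1) + X ^ (m+1)

lemma constG (n m : ℕ) : constantCoeff (Gser n m) = 1 := by
  simp [Gser, map_sum, zero_pow]

lemma factorG (n m : ℕ) :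
    (1 - (n : ℝ) • X + (n : ℝ) • X ^ (m+1) - X ^ (m+2) : PowerSeries ℝ)
      = (1 - X) * Gser n m := by
  have h := psGeom m
  simp only [Gser, smul_eq_C_mul, map_sub, map_one]
  linear_combination (C (n:ℝ) - 1) * h

lemma dzero (n m : ℕ) : coeff 0 (Gser n m)⁻¹ = 1 := by
  rw [coeff_zero_eq_constantCoeff_apply, constantCoeff_inv, constG]; norm_num

lemma recG (n m : ℕ) (j : ℕ) :
    coeff j (Gser n m)⁻¹
      = (if j = 0 then 1 else 0)
        + ((n:ℝ) - 1) * ∑ i ∈ Finset.range m,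
            (if i + 1 ≤ j then coeff (j - (i+1)) (Gser n m)⁻¹ else 0)
        - (if m + 1 ≤ j then coeff (j - (m+1)) (Gser n m)⁻¹ else 0) := by
  have hG : constantCoeff (Gser n m) ≠ 0 := by rw [constG]; norm_num
  have h1 : Gser n m * (Gser n m)⁻¹ = 1 := PowerSeries.mul_inv_cancel _ hG
  have hGdef : Gser n m
      = 1 - C ((n:ℝ)-1) * ∑ i ∈ Finset.range m, X ^ (i+1) + X ^ (m+1) := by
    rw [Gser, smul_eq_C_mul]
  have h2 : (Gser n m)⁻¹
      = 1 + C ((n:ℝ)-1) * ((∑ i ∈ Finset.range m, X ^ (i+1)) * (Gser n m)⁻¹)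
        - X ^ (m+1) * (Gser n m)⁻¹ := by
    linear_combination h1 - (Gser n m)⁻¹ * hGdef
  calc coeff j (Gser n m)⁻¹
      = coeff j (1 + C ((n:ℝ)-1) * ((∑ i ∈ Finset.range m, X ^ (i+1)) * (Gser n m)⁻¹)
        - X ^ (m+1) * (Gser n m)⁻¹) := by rw [← h2]
    _ = _ := by
        rw [map_sub, map_add, coeff_one, coeff_C_mul, Finset.sum_mul, map_sum]
        simp only [coeff_X_pow_mul']

lemma mainT (a : ℝ) (m : ℕ) (d : ℕ → ℝ) (ha : 1 ≤ a) (hm : 1 ≤ m)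
    (hm1 : m = 1 → 3 ≤ a) (hm2 : m = 2 → 2 ≤ a)
    (hd0 : d 0 = 1)
    (hrec : ∀ j, d j = (if j = 0 then (1:ℝ) else 0)
        + a * ∑ i ∈ Finset.range m, (if i + 1 ≤ j then d (j - (i+1)) else 0)
        - (if m + 1 ≤ j then d (j - (m+1)) else 0)) :
    ∀ j : ℕ, 0 ≤ d j ∧ (∀ j', j' + 1 = j → d j' ≤ d j)
      ∧ (∀ j', j' + 2 = j → d j' + d (j'+1) ≤ d j) := by
  intro j
  induction j using Nat.strong_induction_on with
  | _ j IH =>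
  have nonneg : ∀ i, i < j → 0 ≤ d i := fun i hi => (IH i hi).1
  have mono : ∀ i2, i2 < j → ∀ i1, i1 ≤ i2 → d i1 ≤ d i2 := by
    intro i2
    induction i2 with
    | zero =>
      intro _ i1 h1
      have : i1 = 0 := by omega
      rw [this]
    | succ i ihi =>
      intro hlt i1 h1
      rcases Nat.eq_or_lt_of_le h1 with h | h
      · rw [h]
      · exact le_trans (ihi (by omega) i1 (by omega)) ((IH (i+1) hlt).2.1 i rfl)
  obtain _ | _ | j2 := j
  · refine ⟨by rw [hd0]; norm_num, fun j' h => by omega, fun j' h => by omega⟩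
  · have e1 : d 1 = a := by
      rw [hrec 1]
      have hc : ∀ i ∈ Finset.range m, (if i + 1 ≤ 1 then d (1 - (i+1)) else 0)
          = if i = 0 then (1:ℝ) else 0 := by
        intro i _
        rcases Nat.eq_zero_or_pos i with h | h
        · subst h; simp [hd0]
        · rw [if_neg (by omega), if_neg (by omega)]
      rw [Finset.sum_congr rfl hc, Finset.sum_ite_eq' (Finset.range m) 0 (fun _ => (1:ℝ)),
        if_pos (Finset.mem_range.2 (by omega : 0 < m)), if_neg (by omega : ¬(1:ℕ) = 0),
        if_neg (by omega : ¬ m + 1 ≤ 1)]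
      ring
    refine ⟨by rw [e1]; linarith, fun j' h => ?_, fun j' h => by omega⟩
    have : j' = 0 := by omega
    subst this; rw [e1, hd0]; exact ha
  · -- j = j2 + 2
    set E : ℕ → ℝ := fun i => if i + 1 ≤ j2+2 then d (j2+2 - (i+1)) else 0 with hE
    have hEnn : ∀ i, 0 ≤ E i := by
      intro i
      by_cases h : i + 1 ≤ j2 + 2
      · simp only [hE, if_pos h]; exact nonneg _ (by omega)
      · simp only [hE, if_neg h]; exact le_refl 0
    have hE0 : E 0 = d (j2+1) := by simp [hE]
    have hE1 : E 1 = d j2 := by simp [hE]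
    have hrecj : d (j2+2) = a * ∑ i ∈ Finset.range m, E i
        - (if m + 1 ≤ j2+2 then d (j2+2 - (m+1)) else 0) := by
      rw [hrec (j2+2), if_neg (by omega : ¬ j2+2 = 0)]
      simp only [hE]
      ring
    have claim : d j2 + d (j2+1) ≤ d (j2+2) := by
      have hmono1 : d j2 ≤ d (j2+1) := mono (j2+1) (by omega) j2 (by omega)
      have hnn0 : 0 ≤ d j2 := nonneg _ (by omega)
      have hnn1 : 0 ≤ d (j2+1) := nonneg _ (by omega)
      rcases Nat.lt_or_ge m 3 with hm3 | hm3
      · interval_cases m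
        · -- m = 1
          have ha3 : 3 ≤ a := hm1 rfl
          rw [hrecj, Finset.sum_range_one, hE0, if_pos (by omega)]
          have : j2 + 2 - (1+1) = j2 := by omega
          rw [this]
          nlinarith
        · -- m = 2
          have ha2 : 2 ≤ a := hm2 rfl
          rw [hrecj, Finset.sum_range_succ, Finset.sum_range_one, hE0, hE1]
          have hsub : (if 2 + 1 ≤ j2+2 then d (j2+2 - (2+1)) else 0) ≤ d j2 := by
            by_cases h : 2 + 1 ≤ j2 + 2
            · rw [if_pos h]; exact mono j2 (by omega) _ (by omega)
            · rw [if_neg h]; exact hnn0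
          nlinarith
      · -- m ≥ 3
        have hsum : E 0 + E 1 + E 2 ≤ ∑ i ∈ Finset.range m, E i := by
          have h := Finset.sum_le_sum_of_subset_of_nonneg
            (Finset.range_subset_range.2 hm3) (fun i _ _ => hEnn i)
          rw [Finset.sum_range_succ, Finset.sum_range_succ, Finset.sum_range_one] at h
          exact h
        have hsub : (if m + 1 ≤ j2+2 then d (j2+2 - (m+1)) else 0) ≤ E 2 := by
          by_cases h : m + 1 ≤ j2 + 2
          · rw [if_pos h]
            have hE2 : E 2 = d (j2+2-3) := by
              simp only [hE, if_pos (show 2 + 1 ≤ j2 + 2 by omega)]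
            rw [hE2]
            exact mono (j2+2-3) (by omega) _ (by omega)
          · rw [if_neg h]; exact hEnn 2
        have hSnn : 0 ≤ ∑ i ∈ Finset.range m, E i := Finset.sum_nonneg fun i _ => hEnn i
        have haS : (∑ i ∈ Finset.range m, E i) ≤ a * ∑ i ∈ Finset.range m, E i := by
          nlinarith
        rw [hrecj]
        have := hEnn 2
        linarith [hE0, hE1]
    refine ⟨?_, fun j' h => ?_, fun j' h => ?_⟩
    · show 0 ≤ d (j2+2)
      have hnn0 : 0 ≤ d j2 := nonneg _ (by omega)
      have hnn1 : 0 ≤ d (j2+1) := nonneg _ (by omega)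
      linarith
    · have hj : j' = j2 + 1 := by omega
      rw [hj]
      show d (j2+1) ≤ d (j2+2)
      have hnn0 : 0 ≤ d j2 := nonneg _ (by omega)
      linarith
    · have hj : j' = j2 := by omega
      rw [hj]
      show d j2 + d (j2+1) ≤ d (j2+2)
      exact claim

lemma growthT (d : ℕ → ℝ) (hd0 : d 0 = 1)
    (T : ∀ j : ℕ, 0 ≤ d j ∧ (∀ j', j' + 1 = j → d j' ≤ d j)
      ∧ (∀ j', j' + 2 = j → d j' + d (j'+1) ≤ d j)) :
    ∀ j : ℕ, (1/2) * (3/2:ℝ)^j ≤ d j := by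
  intro j
  induction j using Nat.strong_induction_on with
  | _ j IH =>
  obtain _ | _ | j2 := j
  · rw [hd0]; norm_num
  · have h1 : d 0 ≤ d 1 := (T 1).2.1 0 rfl
    rw [hd0] at h1
    norm_num
    linarith
  · have h := (T (j2+2)).2.2 j2 rfl
    have i1 := IH j2 (by omega)
    have i2 := IH (j2+1) (by omega)
    have hp : (0:ℝ) < (3/2)^j2 := by positivity
    show (1/2) * (3/2:ℝ)^(j2+2) ≤ d (j2+2)
    have e1 : ((3/2:ℝ))^(j2+2) = (3/2)^j2 * (9/4) := by ring
    have e2 : ((3/2:ℝ))^(j2+1) = (3/2)^j2 * (3/2) := by ring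
    nlinarith

lemma invOneSubX : ((1 - X : PowerSeries ℝ))⁻¹ = PowerSeries.mk fun _ => (1:ℝ) := by
  rw [eq_comm, PowerSeries.eq_inv_iff_mul_eq_one]
  · ext j
    rw [mul_sub, mul_one, map_sub]
    cases j with
    | zero => simp
    | succ i => simp [coeff_succ_mul_X]
  · simp

lemma rootG (n m : ℕ) (h3 : (3:ℝ) ≤ ((n:ℝ)-1) * m) :
    ∃ r : ℝ, 0 < r ∧ r < 1 ∧
      1 - (n:ℝ)*r + (n:ℝ)*r^(m+1) - r^(m+2) = 0 := by
  set f : ℝ → ℝ := fun x => 1 - ((n:ℝ)-1) * (∑ i ∈ Finset.range m, x^(i+1)) + x^(m+1)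
    with hfdef
  have hcont : Continuous f := by
    apply Continuous.add
    · exact (continuous_const.sub (continuous_const.mul
        (continuous_finset_sum _ fun i _ => continuous_pow (i+1))))
    · exact continuous_pow (m+1)
  have hf0 : f 0 = 1 := by
    simp [hfdef]
  have hf1 : f 1 = 2 - ((n:ℝ)-1) * m := by
    simp [hfdef]
    ring
  have hmem : (0:ℝ) ∈ Set.Ioo (f 1) (f 0) := by
    rw [hf0, hf1]
    constructor <;> [linarith; norm_num]
  obtain ⟨r, hr, hfr⟩ := intermediate_value_Ioo' (by norm_num : (0:ℝ) ≤ 1)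
    hcont.continuousOn hmem
  refine ⟨r, hr.1, hr.2, ?_⟩
  rw [hfdef] at hfr
  simp only at hfr
  have hsum : ∑ i ∈ Finset.range m, r^(i+1) = (∑ i ∈ Finset.range m, r^i) * r := by
    rw [Finset.sum_mul]
    exact Finset.sum_congr rfl fun i _ => by ring
  rw [hsum] at hfr
  have hg : (∑ i ∈ Finset.range m, r^i) * (r - 1) = r^m - 1 := geom_sum_mul r m
  linear_combination (1 - r) * hfr - ((n:ℝ)-1) * r * hg

/-- The power series `Q(t) = (1-t)⁻¹ · (1 - n t + n t^(k-1) - t^k)⁻¹` over `ℝ`. -/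
noncomputable def QserR (n k : ℕ) : PowerSeries ℝ :=
  (1 - PowerSeries.X)⁻¹ *
    (1 - (n : ℝ) • PowerSeries.X + (n : ℝ) • PowerSeries.X ^ (k - 1)
      - PowerSeries.X ^ k)⁻¹

theorem root_and_exponential_growth (n k : ℕ) (hn : 2 ≤ n) (hk : 3 ≤ k)
    (h23 : (n, k) ≠ (2, 3)) (h24 : (n, k) ≠ (2, 4)) (h33 : (n, k) ≠ (3, 3)) :
    (∃ r : ℝ, 0 < r ∧ r < 1 ∧
      1 - (n : ℝ) * r + (n : ℝ) * r ^ (k - 1) - r ^ k = 0) ∧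
    ∃ c q : ℝ, 0 < c ∧ 1 < q ∧
      ∀ j : ℕ, c * q ^ j ≤ PowerSeries.coeff (R := ℝ) j (QserR n k) := by
  obtain ⟨m, rfl⟩ : ∃ m, k = m + 2 := ⟨k - 2, by omega⟩
  have hm' : 1 ≤ m := by omega
  have h3nat : 3 ≤ (n - 1) * m := by
    by_contra hlt
    push_neg at hlt
    have h1 : (n - 1) * 1 ≤ (n - 1) * m := Nat.mul_le_mul_left _ hm'
    have h2 : 1 * m ≤ (n - 1) * m := Nat.mul_le_mul_right _ (by omega)
    have hn3 : n ≤ 3 := by omega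
    have hm3 : m ≤ 2 := by omega
    interval_cases n <;> interval_cases m <;> simp_all
  have ha : (1:ℝ) ≤ (n:ℝ) - 1 := by
    have : (2:ℝ) ≤ (n:ℝ) := by exact_mod_cast hn
    linarith
  have hm1 : m = 1 → (3:ℝ) ≤ (n:ℝ) - 1 := by
    intro h
    rw [h, mul_one] at h3nat
    have : 4 ≤ n := by omega
    have : (4:ℝ) ≤ (n:ℝ) := by exact_mod_cast this
    linarith
  have hm2 : m = 2 → (2:ℝ) ≤ (n:ℝ) - 1 := by
    intro h
    rw [h] at h3nat
    have : 3 ≤ n := by omega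
    have : (3:ℝ) ≤ (n:ℝ) := by exact_mod_cast this
    linarith
  have h3real : (3:ℝ) ≤ ((n:ℝ) - 1) * m := by
    have h := h3nat
    have hc : ((3:ℕ):ℝ) ≤ (((n-1) * m : ℕ) : ℝ) := Nat.cast_le.2 h
    push_cast [Nat.cast_sub (by omega : 1 ≤ n)] at hc
    linarith
  constructor
  · obtain ⟨r, h1, h2, h3⟩ := rootG n m h3real
    exact ⟨r, h1, h2, by rw [show m + 2 - 1 = m + 1 from rfl]; exact h3⟩
  · refine ⟨1/2, 3/2, by norm_num, by norm_num, ?_⟩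
    intro j
    have hd0 := dzero n m
    have T := mainT ((n:ℝ)-1) m (fun j => coeff j (Gser n m)⁻¹) ha hm' hm1 hm2 hd0
      (recG n m)
    have grow := growthT _ hd0 T
    have hQ : QserR n (m+2) = (1 - X : PowerSeries ℝ)⁻¹ * ((Gser n m)⁻¹ * (1 - X)⁻¹) := by
      unfold QserR
      rw [show m + 2 - 1 = m + 1 from rfl, factorG n m, PowerSeries.mul_inv_rev]
    rw [hQ]
    obtain ⟨W, hWdef⟩ : ∃ W : PowerSeries ℝ, W = (Gser n m)⁻¹ * (1 - X)⁻¹ := ⟨_, rfl⟩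
    rw [← hWdef]
    have hWge : coeff j (Gser n m)⁻¹ ≤ coeff j W := by
      rw [hWdef, invOneSubX, coeff_mul]
      have hmem : ((j, 0) : ℕ × ℕ) ∈ Finset.HasAntidiagonal.antidiagonal j := by simp
      have := Finset.single_le_sum
        (f := fun x : ℕ × ℕ => coeff x.1 (Gser n m)⁻¹ * coeff x.2 (mk fun _ => (1:ℝ)))
        (fun x _ => by simp only [coeff_mk, mul_one]; exact (T x.1).1) hmem
      simpa using this
    have hWnn : ∀ i, 0 ≤ coeff i W := by
      intro i
      rw [hWdef, invOneSubX, coeff_mul]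
      apply Finset.sum_nonneg
      intro x _
      simp only [coeff_mk, mul_one]
      exact (T x.1).1
    have hfin : coeff j W ≤ coeff j ((1 - X : PowerSeries ℝ)⁻¹ * W) := by
      rw [invOneSubX, coeff_mul]
      have hmem : ((0, j) : ℕ × ℕ) ∈ Finset.HasAntidiagonal.antidiagonal j := by simp
      have := Finset.single_le_sum
        (f := fun x : ℕ × ℕ => coeff x.1 (mk fun _ => (1:ℝ)) * coeff x.2 W)
        (fun x _ => by simp only [coeff_mk, one_mul]; exact hWnn x.2) hmem
      simpa using this
    calc (1/2) * (3/2:ℝ)^j ≤ coeff j (Gser n m)⁻¹ := grow j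
      _ ≤ _ := le_trans hWge hfin
end

section
/- Let n ≥ 2 and k ≥ 3 with (n,k) ≠ (2,3), and let b_j be the Taylor coefficients of Q(t) = (1−t)^{-1}(1 − n t + n t^{k-1} − t^k)^{-1}. Then the sequence (b_j) is strictly increasing for j ≥ 0; in particular b_j → ∞, so Q is not a polynomial. -/
open PowerSeries Filter

noncomputable def Aser (n k : ℕ) : PowerSeries ℚ :=
  1 - (n : ℚ) • PowerSeries.X + (n : ℚ) • PowerSeries.X ^ (k - 1)
    - PowerSeries.X ^ k

noncomputable def sig (n k : ℕ) (m : ℤ) : ℚ :=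
  if 0 ≤ m then PowerSeries.coeff m.toNat (Aser n k)⁻¹ else 0

lemma constA (n k : ℕ) (hk : 3 ≤ k) : constantCoeff (Aser n k) = 1 := by
  unfold Aser
  rw [← coeff_zero_eq_constantCoeff_apply]
  simp only [map_sub, map_add, coeff_smul, smul_eq_mul, coeff_one, coeff_X_pow, coeff_X]
  rw [if_pos trivial, if_neg (by omega : ¬ (0:ℕ) = 1), if_neg (by omega : ¬ (0:ℕ) = k - 1),
    if_neg (by omega : ¬ (0:ℕ) = k)]
  ring

lemma A_mul_inv (n k : ℕ) (hk : 3 ≤ k) : Aser n k * (Aser n k)⁻¹ = 1 :=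
  PowerSeries.mul_inv_cancel _ (by rw [constA n k hk]; exact one_ne_zero)

lemma sig_neg (n k : ℕ) {m : ℤ} (hm : m < 0) : sig n k m = 0 := by
  unfold sig; rw [if_neg (by omega)]

lemma sig_zero (n k : ℕ) (hk : 3 ≤ k) : sig n k 0 = 1 := by
  unfold sig
  rw [if_pos le_rfl]
  show (coeff 0) (Aser n k)⁻¹ = 1
  rw [coeff_zero_eq_constantCoeff_apply, PowerSeries.constantCoeff_inv, constA n k hk]
  norm_num

lemma sig_sub_nat (n k : ℕ) (j a : ℕ) :
    sig n k ((j : ℤ) - a) = if a ≤ j then PowerSeries.coeff (j - a) (Aser n k)⁻¹ else 0 := by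
  unfold sig
  rcases le_or_gt a j with h | h
  · have h1 : (0:ℤ) ≤ (j:ℤ) - a := by omega
    rw [if_pos h1, if_pos h]
    have h3 : ((j:ℤ) - a).toNat = j - a := by omega
    rw [h3]
  · have h1 : ¬ (0:ℤ) ≤ (j:ℤ) - a := by omega
    have h2 : ¬ a ≤ j := by omega
    rw [if_neg h1, if_neg h2]

lemma sig_rec (n k : ℕ) (hk : 3 ≤ k) (m : ℤ) (hm : 1 ≤ m) :
    sig n k m = n * sig n k (m - 1) - n * sig n k (m - k + 1) + sig n k (m - k) := by
  set S := (Aser n k)⁻¹ with hS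
  obtain ⟨j, rfl⟩ : ∃ j : ℕ, m = (j : ℤ) := ⟨m.toNat, by omega⟩
  have hj : 1 ≤ j := by exact_mod_cast hm
  have key : (coeff j) (Aser n k * S) = 0 := by
    rw [A_mul_inv n k hk, coeff_one, if_neg (by omega)]
  have expand : Aser n k * S
      = S - (n:ℚ) • (PowerSeries.X * S) + (n:ℚ) • (PowerSeries.X ^ (k-1) * S)
        - PowerSeries.X ^ k * S := by
    unfold Aser
    rw [sub_mul, add_mul, sub_mul, one_mul, smul_mul_assoc, smul_mul_assoc]
  rw [expand] at key
  simp only [map_sub, map_add, coeff_smul, smul_eq_mul] at key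
  have e1 : (coeff j) (PowerSeries.X * S) = (coeff (j-1)) S := by
    obtain ⟨i, rfl⟩ : ∃ i, j = i + 1 := ⟨j - 1, by omega⟩
    rw [coeff_succ_X_mul]
    norm_num
  have e2 : (coeff j) (PowerSeries.X ^ (k-1) * S)
      = if k - 1 ≤ j then (coeff (j - (k-1))) S else 0 := coeff_X_pow_mul' S (k-1) j
  have e3 : (coeff j) (PowerSeries.X ^ k * S)
      = if k ≤ j then (coeff (j - k)) S else 0 := coeff_X_pow_mul' S k j
  rw [e1, e2, e3] at key
  have s0 : sig n k (j : ℤ) = (coeff j) S := by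
    unfold sig
    rw [if_pos (by omega : (0:ℤ) ≤ (j:ℤ))]
    have h3 : ((j:ℤ)).toNat = j := by omega
    rw [h3]
  have s1 : sig n k ((j:ℤ) - 1) = (coeff (j-1)) S := by
    rw [show ((j:ℤ) - 1) = (j:ℤ) - ((1:ℕ):ℤ) by norm_num, sig_sub_nat, if_pos hj]
  have s2 : sig n k ((j:ℤ) - k + 1) = if k - 1 ≤ j then (coeff (j - (k-1))) S else 0 := by
    have h : ((j:ℤ) - k + 1) = (j:ℤ) - ((k-1 : ℕ) : ℤ) := by push_cast [Nat.cast_sub (by omega : 1 ≤ k)]; ring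
    rw [h, sig_sub_nat]
  have s3 : sig n k ((j:ℤ) - k) = if k ≤ j then (coeff (j - k)) S else 0 := by
    rw [sig_sub_nat]
  rw [s0, s1, s2, s3]
  linarith [key]

noncomputable def dlt (n k : ℕ) (m : ℤ) : ℚ := sig n k m - sig n k (m - 1)

lemma dlt_neg (n k : ℕ) {m : ℤ} (hm : m < 0) : dlt n k m = 0 := by
  unfold dlt; rw [sig_neg n k hm, sig_neg n k (by omega)]; ring

lemma dlt_zero (n k : ℕ) (hk : 3 ≤ k) : dlt n k 0 = 1 := by
  unfold dlt; rw [sig_zero n k hk, sig_neg n k (by norm_num)]; ring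

lemma sig_one (n k : ℕ) (hk : 3 ≤ k) : sig n k 1 = n := by
  have h := sig_rec n k hk 1 le_rfl
  rw [show (1:ℤ) - 1 = 0 from by ring, sig_zero n k hk,
    sig_neg n k (by omega : (1:ℤ) - k + 1 < 0), sig_neg n k (by omega : (1:ℤ) - k < 0)] at h
  rw [h]; ring

lemma dlt_step (n k : ℕ) (hn : 2 ≤ n) (hk : 3 ≤ k) (hnk : ¬(n = 2 ∧ k = 3)) :
    ∀ j : ℕ, dlt n k ((j : ℤ) - 1) ≤ dlt n k (j : ℤ) := by
  intro j
  induction j using Nat.strong_induction_on with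
  | _ j IH =>
  have step : ∀ m : ℤ, m ≤ (j : ℤ) - 1 → dlt n k (m - 1) ≤ dlt n k m := by
    intro m hm
    rcases lt_trichotomy m 0 with h | h | h
    · rw [dlt_neg n k h, dlt_neg n k (by omega)]
    · subst h
      rw [dlt_zero n k hk, dlt_neg n k (by norm_num)]
      norm_num
    · obtain ⟨i, rfl⟩ : ∃ i : ℕ, m = (i : ℤ) := ⟨m.toNat, by omega⟩
      exact IH i (by omega)
  have dmono : ∀ a b : ℤ, a ≤ b → b ≤ (j : ℤ) - 1 → dlt n k a ≤ dlt n k b := by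
    intro a
    refine Int.le_induction ?_ ?_
    · intro _; exact le_refl _
    · intro m _ ih hb
      have h2 := step (m + 1) hb
      rw [show m + 1 - 1 = m from by ring] at h2
      exact (ih (by omega)).trans h2
  have dnonneg : ∀ m : ℤ, m ≤ (j : ℤ) - 1 → 0 ≤ dlt n k m := by
    intro m hm
    rcases lt_or_ge m 0 with h | h
    · rw [dlt_neg n k h]
    · have h2 := dmono (-1) m (by omega) hm
      rwa [dlt_neg n k (by norm_num)] at h2
  have smono : ∀ a b : ℤ, a ≤ b → b ≤ (j : ℤ) - 1 → sig n k a ≤ sig n k b := by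
    intro a
    refine Int.le_induction ?_ ?_
    · intro _; exact le_refl _
    · intro m _ ih hb
      have h1 := dnonneg (m + 1) hb
      unfold dlt at h1
      rw [show m + 1 - 1 = m from by ring] at h1
      have h2 := ih (by omega)
      linarith
  rcases Nat.lt_or_ge j 2 with hj | hj
  · interval_cases j
    · rw [show ((0:ℕ):ℤ) - 1 = -1 from by norm_num, dlt_neg n k (by norm_num),
        show ((0:ℕ):ℤ) = 0 from by norm_num, dlt_zero n k hk]
      norm_num
    · rw [show ((1:ℕ):ℤ) - 1 = 0 from by norm_num, dlt_zero n k hk,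
        show ((1:ℕ):ℤ) = 1 from by norm_num]
      unfold dlt
      rw [sig_one n k hk, show (1:ℤ) - 1 = 0 from by ring, sig_zero n k hk]
      have : (2:ℚ) ≤ n := by exact_mod_cast hn
      linarith
  · -- j ≥ 2
    have hM : 1 ≤ (j : ℤ) := by omega
    have hrec := sig_rec n k hk j hM
    have hA : sig n k ((j:ℤ) - k + 1) ≤ sig n k ((j:ℤ) - 1) :=
      smono _ _ (by omega) (by omega)
    have hn2 : (2:ℚ) ≤ (n:ℚ) := by exact_mod_cast hn
    have hprod : ((n:ℚ) - 2) * sig n k ((j:ℤ) - k + 1) ≤ ((n:ℚ) - 2) * sig n k ((j:ℤ) - 1) :=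
      mul_le_mul_of_nonneg_left hA (by linarith)
    unfold dlt
    rw [show (j:ℤ) - 1 - 1 = (j:ℤ) - 2 from by ring]
    rcases eq_or_lt_of_le hk with hk3 | hk4
    · -- k = 3
      have hk3' : k = 3 := hk3.symm
      subst hk3'
      have hn3 : 3 ≤ n := by omega
      have hn3' : (3:ℚ) ≤ (n:ℚ) := by exact_mod_cast hn3
      have hd1 : dlt n 3 ((j:ℤ) - 2) ≤ dlt n 3 ((j:ℤ) - 1) := by
        have h2 := step ((j:ℤ) - 1) (by omega)
        rwa [show (j:ℤ) - 1 - 1 = (j:ℤ) - 2 from by ring] at h2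
      have hd0 : 0 ≤ dlt n 3 ((j:ℤ) - 2) := dnonneg _ (by omega)
      have hp2 : ((n:ℚ) - 2) * dlt n 3 ((j:ℤ) - 2) ≤ ((n:ℚ) - 2) * dlt n 3 ((j:ℤ) - 1) :=
        mul_le_mul_of_nonneg_left hd1 (by linarith)
      have hp4 : dlt n 3 ((j:ℤ) - 2) ≤ ((n:ℚ) - 2) * dlt n 3 ((j:ℤ) - 2) :=
        le_mul_of_one_le_left hd0 (by linarith)
      unfold dlt at hp2 hp4
      rw [show (j:ℤ) - 2 - 1 = (j:ℤ) - 3 from by ring,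
        show (j:ℤ) - 1 - 1 = (j:ℤ) - 2 from by ring] at hp2
      rw [show (j:ℤ) - 2 - 1 = (j:ℤ) - 3 from by ring] at hp4
      rw [show ((3:ℕ):ℤ) = 3 from by norm_num, show (j:ℤ) - 3 + 1 = (j:ℤ) - 2 from by ring]
        at hrec
      nlinarith [hrec, hp2, hp4]
    · -- k ≥ 4
      have hk4' : (4:ℤ) ≤ (k:ℤ) := by exact_mod_cast hk4
      have hs2 : sig n k ((j:ℤ) - k + 2) ≤ sig n k ((j:ℤ) - 2) :=
        smono _ _ (by omega) (by omega)
      have hd : dlt n k ((j:ℤ) - k + 1) ≤ dlt n k ((j:ℤ) - k + 2) := by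
        have h2 := step ((j:ℤ) - k + 2) (by omega)
        rwa [show (j:ℤ) - k + 2 - 1 = (j:ℤ) - k + 1 from by ring] at h2
      unfold dlt at hd
      rw [show (j:ℤ) - k + 2 - 1 = (j:ℤ) - k + 1 from by ring,
        show (j:ℤ) - k + 1 - 1 = (j:ℤ) - k from by ring] at hd
      nlinarith [hrec, hprod, hs2, hd]

lemma dlt_ge_one (n k : ℕ) (hn : 2 ≤ n) (hk : 3 ≤ k) (hnk : ¬(n = 2 ∧ k = 3))
    {m : ℤ} (hm : 0 ≤ m) : 1 ≤ dlt n k m := by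
  have mono : ∀ b : ℤ, 0 ≤ b → dlt n k 0 ≤ dlt n k b := by
    refine Int.le_induction ?_ ?_
    · exact le_refl _
    · intro b hb ih
      have hstep := dlt_step n k hn hk hnk (b + 1).toNat
      rw [show (((b + 1).toNat : ℤ)) = b + 1 from by omega,
        show (b : ℤ) + 1 - 1 = b from by ring] at hstep
      exact ih.trans hstep
  have h := mono m hm
  rwa [dlt_zero n k hk] at h

lemma sig_ge_one (n k : ℕ) (hn : 2 ≤ n) (hk : 3 ≤ k) (hnk : ¬(n = 2 ∧ k = 3)) :
    ∀ j : ℕ, 1 ≤ sig n k (j : ℤ) := by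
  intro j
  induction j with
  | zero => rw [show ((0:ℕ):ℤ) = 0 from rfl, sig_zero n k hk]
  | succ i ih =>
    have h1 := dlt_ge_one n k hn hk hnk (m := (i:ℤ) + 1) (by omega)
    unfold dlt at h1
    rw [show ((i:ℤ) + 1 - 1) = (i:ℤ) from by ring] at h1
    rw [show ((i+1 : ℕ):ℤ) = (i:ℤ) + 1 from by omega]
    linarith

lemma Q_eq (n k : ℕ) :
    (1 - PowerSeries.X : PowerSeries ℚ) * Qser n k = (Aser n k)⁻¹ := by
  have hc : constantCoeff (1 - PowerSeries.X : PowerSeries ℚ) ≠ 0 := by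
    rw [map_sub, constantCoeff_one, constantCoeff_X]
    norm_num
  have h1 : Qser n k = (1 - PowerSeries.X : PowerSeries ℚ)⁻¹ * (Aser n k)⁻¹ := rfl
  rw [h1, ← mul_assoc, PowerSeries.mul_inv_cancel _ hc, one_mul]

lemma sig_coe (n k : ℕ) (j : ℕ) :
    sig n k (j : ℤ) = PowerSeries.coeff j (Aser n k)⁻¹ := by
  unfold sig
  rw [if_pos (by omega : (0:ℤ) ≤ (j:ℤ)), show ((j:ℤ)).toNat = j from by omega]

lemma b_zero (n k : ℕ) (hk : 3 ≤ k) : PowerSeries.coeff 0 (Qser n k) = 1 := by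
  rw [coeff_zero_eq_constantCoeff_apply]
  have h1 : Qser n k = (1 - PowerSeries.X : PowerSeries ℚ)⁻¹ * (Aser n k)⁻¹ := rfl
  rw [h1, map_mul, PowerSeries.constantCoeff_inv, PowerSeries.constantCoeff_inv,
    constA n k hk, map_sub, constantCoeff_one, constantCoeff_X]
  norm_num

lemma b_diff (n k : ℕ) (j : ℕ) :
    PowerSeries.coeff (j + 1) (Qser n k)
      = PowerSeries.coeff j (Qser n k) + sig n k ((j:ℤ) + 1) := by
  have h := congrArg (PowerSeries.coeff (j + 1)) (Q_eq n k)
  rw [sub_mul, one_mul, map_sub, coeff_succ_X_mul] at h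
  have h2 : sig n k ((j:ℤ) + 1) = PowerSeries.coeff (j + 1) (Aser n k)⁻¹ := by
    rw [show ((j:ℤ) + 1) = ((j + 1 : ℕ):ℤ) from by omega, sig_coe]
  linarith

theorem Qser_coeff_strictMono (n k : ℕ) (hn : 2 ≤ n) (hk : 3 ≤ k)
    (hnk : (n, k) ≠ (2, 3)) :
    StrictMono (fun j : ℕ => PowerSeries.coeff j (Qser n k)) ∧
    Filter.Tendsto (fun j : ℕ => PowerSeries.coeff j (Qser n k))
      Filter.atTop Filter.atTop := by
  have hnk' : ¬(n = 2 ∧ k = 3) := by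
    rintro ⟨h1, h2⟩
    exact hnk (by rw [h1, h2])
  have hs : ∀ j : ℕ, 1 ≤ sig n k (j : ℤ) := sig_ge_one n k hn hk hnk'
  have hb : ∀ j : ℕ, (j : ℚ) ≤ PowerSeries.coeff j (Qser n k) := by
    intro j
    induction j with
    | zero => rw [b_zero n k hk]; norm_num
    | succ i ih =>
      have h1 := b_diff n k i
      have h2 := hs (i + 1)
      rw [show ((i + 1 : ℕ):ℤ) = (i:ℤ) + 1 from by omega] at h2
      push_cast
      linarith
  constructor
  · apply strictMono_nat_of_lt_succ
    intro j
    have h1 := b_diff n k j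
    have h2 := hs (j + 1)
    rw [show ((j + 1 : ℕ):ℤ) = (j:ℤ) + 1 from by omega] at h2
    show PowerSeries.coeff j (Qser n k) < PowerSeries.coeff (j + 1) (Qser n k)
    linarith
  · exact tendsto_atTop_mono hb tendsto_natCast_atTop_atTop
end
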